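/- arXiv:1209.5591 — 4 statements merged into one kernel-verified Lean document; each statement's English description precedes it below -/
import Mathlib

section
/- The involution of the affine 4-space with coordinates (w,x,y,z) given by w' = (wz−xy)(z−1)/((x−z)(y−z)), x' = (wz−xy)(y−1)/((w−y)(y−z)), y' = (wz−xy)(x−1)/((w−x)(x−z)), z' = (wz−xy)(w−1)/((w−x)(w−y)) is an involution on its domain of definition: applying the map twice returns (w,x,y,z). -/
variable {K : Type*} [Field K]

/-- The rational map `σ(w,x,y,z) = (w',x',y',z')` of affine 4-space given by
`w' = (wz−xy)(z−1)/((x−z)(y−z))`, `x' = (wz−xy)(y−1)/((w−y)(y−z))`,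
`y' = (wz−xy)(x−1)/((w−x)(x−z))`, `z' = (wz−xy)(w−1)/((w−x)(w−y))`. -/
def sigmaMap (p : K × K × K × K) : K × K × K × K :=
  ((p.1 * p.2.2.2 - p.2.1 * p.2.2.1) * (p.2.2.2 - 1) / ((p.2.1 - p.2.2.2) * (p.2.2.1 - p.2.2.2)),
   (p.1 * p.2.2.2 - p.2.1 * p.2.2.1) * (p.2.2.1 - 1) / ((p.1 - p.2.2.1) * (p.2.2.1 - p.2.2.2)),
   (p.1 * p.2.2.2 - p.2.1 * p.2.2.1) * (p.2.1 - 1) / ((p.1 - p.2.1) * (p.2.1 - p.2.2.2)),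
   (p.1 * p.2.2.2 - p.2.1 * p.2.2.1) * (p.1 - 1) / ((p.1 - p.2.1) * (p.1 - p.2.2.1)))

/-- The point `p = (w,x,y,z)` lies in the domain of definition of `σ`: all denominators
are nonzero. -/
def SigmaDom (p : K × K × K × K) : Prop :=
  p.2.1 - p.2.2.2 ≠ 0 ∧ p.2.2.1 - p.2.2.2 ≠ 0 ∧ p.1 - p.2.2.1 ≠ 0 ∧ p.1 - p.2.1 ≠ 0

/-- Helper: evaluating a compound fraction of the shape appearing in `σ ∘ σ`. -/
lemma sigma_aux {A B C D' P Q R S t : K} (hP : P ≠ 0) (hQ : Q ≠ 0) (hR : R ≠ 0) (hS : S ≠ 0)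
    (hC : C ≠ 0) (hD : D' ≠ 0)
    (h : A * B * (R * S) = t * (C * D' * (P * Q))) :
    A / P * (B / Q) / (C / R * (D' / S)) = t := by
  field_simp
  linear_combination h

set_option maxHeartbeats 1600000 in
/-- The map `σ` is an involution on its domain of definition: at any point where the
denominators appearing in both applications of the map are nonzero, applying `σ` twice
returns the original point `(w,x,y,z)`. -/
theorem sigmaMap_involutive (p : K × K × K × K) (h₁ : SigmaDom p) (h₂ : SigmaDom (sigmaMap p)) :
    sigmaMap (sigmaMap p) = p := by
  obtain ⟨w, x, y, z⟩ := p
  obtain ⟨a1, a2, a3, a4⟩ := h₁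
  obtain ⟨b1, b2, b3, b4⟩ := h₂
  simp only [sigmaMap, SigmaDom] at *
  clear b2 b3 b4
  field_simp at b1
  rw [show (w * z - x * y) * ((y - 1) * (w - x) - (y - z) * (w - 1)) =
      (w * z - x * y) * (w * z - x * y - w - z + x + y) by ring] at b1
  have hD : (w * z - x * y) ≠ 0 := fun h => b1 (by rw [h]; ring)
  have hE : (w * z - x * y - w - z + x + y) ≠ 0 := fun h => b1 (by rw [h]; ring)
  have hDE : (w * z - x * y) * (w * z - x * y - w - z + x + y) ≠ 0 := mul_ne_zero hD hE
  have eDet : (w * z - x * y) * (z - 1) / ((x - z) * (y - z)) * ((w * z - x * y) * (w - 1) / ((w - x) * (w - y))) - (w * z - x * y) * (y - 1) / ((w - y) * (y - z)) * ((w * z - x * y) * (x - 1) / ((w - x) * (x - z)))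
      = (w * z - x * y) ^ 2 * (w * z - x * y - w - z + x + y) / ((w - x) * (w - y) * (x - z) * (y - z)) := by
    field_simp; ring
  have eWX : (w * z - x * y) * (z - 1) / ((x - z) * (y - z)) - (w * z - x * y) * (y - 1) / ((w - y) * (y - z)) = (w * z - x * y) * (w * z - x * y - w - z + x + y) / ((x - z) * (y - z) * (w - y)) := by
    field_simp; ring
  have eWY : (w * z - x * y) * (z - 1) / ((x - z) * (y - z)) - (w * z - x * y) * (x - 1) / ((w - x) * (x - z)) = (w * z - x * y) * (w * z - x * y - w - z + x + y) / ((x - z) * (y - z) * (w - x)) := by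
    field_simp; ring
  have eXZ : (w * z - x * y) * (y - 1) / ((w - y) * (y - z)) - (w * z - x * y) * (w - 1) / ((w - x) * (w - y)) = (w * z - x * y) * (w * z - x * y - w - z + x + y) / ((w - y) * (y - z) * (w - x)) := by
    field_simp; ring
  have eYZ : (w * z - x * y) * (x - 1) / ((w - x) * (x - z)) - (w * z - x * y) * (w - 1) / ((w - x) * (w - y)) = (w * z - x * y) * (w * z - x * y - w - z + x + y) / ((w - x) * (x - z) * (w - y)) := by
    field_simp; ring
  have eW1 : (w * z - x * y) * (z - 1) / ((x - z) * (y - z)) - 1 = z * (w * z - x * y - w - z + x + y) / ((x - z) * (y - z)) := by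
    field_simp; ring
  have eX1 : (w * z - x * y) * (y - 1) / ((w - y) * (y - z)) - 1 = y * (w * z - x * y - w - z + x + y) / ((w - y) * (y - z)) := by
    field_simp; ring
  have eY1 : (w * z - x * y) * (x - 1) / ((w - x) * (x - z)) - 1 = x * (w * z - x * y - w - z + x + y) / ((w - x) * (x - z)) := by
    field_simp; ring
  have eZ1 : (w * z - x * y) * (w - 1) / ((w - x) * (w - y)) - 1 = w * (w * z - x * y - w - z + x + y) / ((w - x) * (w - y)) := by
    field_simp; ring
  have n1 : (w - x) * (w - y) * (x - z) * (y - z) ≠ 0 :=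
    mul_ne_zero (mul_ne_zero (mul_ne_zero a4 a3) a1) a2
  rw [Prod.mk.injEq, Prod.mk.injEq, Prod.mk.injEq]
  refine ⟨?_, ?_, ?_, ?_⟩
  · rw [eDet, eXZ, eYZ, eZ1]
    exact sigma_aux n1 (mul_ne_zero a4 a3) (mul_ne_zero (mul_ne_zero a3 a2) a4)
      (mul_ne_zero (mul_ne_zero a4 a1) a3) hDE hDE (by ring)
  · rw [eDet, eWY, eYZ, eY1]
    exact sigma_aux n1 (mul_ne_zero a4 a1) (mul_ne_zero (mul_ne_zero a1 a2) a4)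
      (mul_ne_zero (mul_ne_zero a4 a1) a3) hDE hDE (by ring)
  · rw [eDet, eWX, eXZ, eX1]
    exact sigma_aux n1 (mul_ne_zero a3 a2) (mul_ne_zero (mul_ne_zero a1 a2) a3)
      (mul_ne_zero (mul_ne_zero a3 a2) a4) hDE hDE (by ring)
  · rw [eDet, eWX, eWY, eW1]
    exact sigma_aux n1 (mul_ne_zero a1 a2) (mul_ne_zero (mul_ne_zero a1 a2) a3)
      (mul_ne_zero (mul_ne_zero a1 a2) a4) hDE hDE (by ring)
end

section
/- Let D be a nonzero rational number that is not a square. If the quadratic field Q(√D) embeds into a number field L that is Galois over Q with cyclic Galois group of order 4, then D > 0 and every prime p ≡ 3 (mod 4) occurs in D with even exponent. -/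
private theorem aux_nt {D s t : ℚ} (hD0 : D ≠ 0) (ht : t ≠ 0) (h : D * t ^ 2 = s ^ 2 + 4) :
    0 < D ∧ ∀ p : ℕ, p.Prime → p % 4 = 3 → Even (padicValRat p D) := by
  constructor
  · nlinarith [sq_nonneg s, sq_nonneg t, pow_pos (abs_pos.mpr ht) 2, sq_abs t]
  intro p hp hp3
  haveI : Fact p.Prime := ⟨hp⟩
  have hp2 : p ≠ 2 := by omega
  set a : ℤ := s.num with ha
  set b : ℤ := (s.den : ℤ) with hb
  have hb0 : b ≠ 0 := by
    simp [hb, s.den_nz]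
  have hN0 : a ^ 2 + 4 * b ^ 2 ≠ 0 := by
    intro hN
    have : b = 0 := by nlinarith [sq_nonneg a, sq_nonneg b]
    exact hb0 this
  -- p does not divide a^2 + 4 b^2
  have hpN : ¬ (p : ℤ) ∣ (a ^ 2 + 4 * b ^ 2) := by
    intro hdvd
    have hz : (a : ZMod p) ^ 2 + 4 * (b : ZMod p) ^ 2 = 0 := by
      have := (ZMod.intCast_zmod_eq_zero_iff_dvd _ p).mpr hdvd
      push_cast at this
      linear_combination this
    by_cases hbz : (b : ZMod p) = 0
    · have haz : (a : ZMod p) = 0 := by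
        have : (a : ZMod p) ^ 2 = 0 := by rw [hbz] at hz; ring_nf at hz ⊢; linear_combination hz
        exact pow_eq_zero_iff (n := 2) (by norm_num) |>.mp this
      have hpa : (p : ℤ) ∣ a := (ZMod.intCast_zmod_eq_zero_iff_dvd _ p).mp haz
      have hpb : (p : ℤ) ∣ b := (ZMod.intCast_zmod_eq_zero_iff_dvd _ p).mp hbz
      have hcop : Nat.Coprime a.natAbs s.den := s.reduced
      have h1 : p ∣ a.natAbs := Int.natCast_dvd_natCast.mp (by simpa using (Int.dvd_natAbs.mpr hpa))
      have h2 : p ∣ s.den := Int.ofNat_dvd.mp (by simpa [hb] using (Int.dvd_natAbs.mpr hpb))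
      exact Nat.Prime.not_dvd_one hp (hcop ▸ Nat.dvd_gcd h1 h2)
    · have h2z : (2 : ZMod p) ≠ 0 := by
        have : ((2 : ℕ) : ZMod p) ≠ 0 := by
          rw [Ne, ZMod.natCast_eq_zero_iff]
          intro hd
          exact hp2 ((Nat.prime_dvd_prime_iff_eq hp Nat.prime_two).mp hd ▸ rfl)
        simpa using this
      have hsq : IsSquare (-1 : ZMod p) := by
        refine ⟨(a : ZMod p) * (2 * (b : ZMod p))⁻¹, ?_⟩
        have hinv : (2 * (b : ZMod p)) * (2 * (b : ZMod p))⁻¹ = 1 :=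
          mul_inv_cancel₀ (mul_ne_zero h2z hbz)
        field_simp
        linear_combination -hz
      rw [ZMod.exists_sq_eq_neg_one_iff] at hsq
      exact hsq hp3
  -- express s^2+4
  have hs : s = (a : ℚ) / (b : ℚ) := by rw [ha, hb]; push_cast; exact (Rat.num_div_den s).symm
  have hbQ : (b : ℚ) ≠ 0 := Int.cast_ne_zero.mpr hb0
  have hDform : D = ((a ^ 2 + 4 * b ^ 2 : ℤ) : ℚ) / ((b : ℚ) ^ 2 * t ^ 2) := by
    have ht2 : t ^ 2 ≠ 0 := pow_ne_zero _ ht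
    field_simp [hs] at h ⊢
    push_cast
    have hsb : s * (b:ℚ) = a := by rw [hs]; exact div_mul_cancel₀ _ hbQ
    linear_combination (b:ℚ)^2 * h + (s*b + a) * hsb
  have hNQ : ((a ^ 2 + 4 * b ^ 2 : ℤ) : ℚ) ≠ 0 := Int.cast_ne_zero.mpr hN0
  have hden : ((b : ℚ) ^ 2 * t ^ 2) ≠ 0 := mul_ne_zero (pow_ne_zero _ hbQ) (pow_ne_zero _ ht)
  rw [hDform, padicValRat.div hNQ hden, padicValRat.mul (pow_ne_zero _ hbQ) (pow_ne_zero _ ht),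
    padicValRat.pow (b:ℚ), padicValRat.pow t, padicValRat.of_int,
    padicValInt.eq_zero_of_not_dvd hpN]
  exact ⟨-(padicValRat p b + padicValRat p t), by push_cast; ring⟩


private theorem aux_gal {D : ℚ} (hD0 : D ≠ 0) (hDsq : ¬IsSquare D)
    (L : Type*) [Field L] [NumberField L] [Algebra ℚ L] [IsGalois ℚ L]
    [IsCyclic (L ≃ₐ[ℚ] L)] (hcard : Nat.card (L ≃ₐ[ℚ] L) = 4)
    (hembed : ∃ α : L, α ^ 2 = (D : L)) :
    ∃ s t : ℚ, t ≠ 0 ∧ D * t ^ 2 = s ^ 2 + 4 := by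
  obtain ⟨α, hα⟩ := hembed
  have hDL : (D : L) ≠ 0 := by
    simpa using (Rat.cast_ne_zero (α := L)).mpr hD0
  have hα0 : α ≠ 0 := fun h => hDL (by rw [← hα, h]; ring)
  obtain ⟨σ, hσ⟩ := IsCyclic.exists_generator (α := L ≃ₐ[ℚ] L)
  -- order of σ is 4
  have hord : orderOf σ = 4 := by
    have h := orderOf_eq_card_of_forall_mem_zpowers hσ
    rwa [hcard] at h
  -- elements fixed by σ are rational
  have hfix : ∀ x : L, σ x = x → ∃ q : ℚ, (q : L) = x := by
    intro x hx
    have hn : ∀ n : ℕ, (σ ^ n) x = x := by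
      intro n
      induction n with
      | zero => simp
      | succ n ih => rw [pow_succ, AlgEquiv.mul_apply, hx, ih]
    have hall : ∀ g : L ≃ₐ[ℚ] L, g x = x := by
      intro g
      obtain ⟨k, hk⟩ := hσ g
      rw [← hk]
      show (σ ^ k) x = x
      rcases k.eq_nat_or_neg with ⟨n, rfl | rfl⟩
      · rw [zpow_natCast]; exact hn n
      · rw [zpow_neg, zpow_natCast]
        exact (AlgEquiv.symm_apply_eq _).mpr (hn n).symm
    have hbot : IntermediateField.fixedField (⊤ : Subgroup (L ≃ₐ[ℚ] L)) = ⊥ :=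
      OrderIso.map_bot (IsGalois.intermediateFieldEquivSubgroup (F := ℚ) (E := L)).symm
    have hx' : x ∈ IntermediateField.fixedField (⊤ : Subgroup (L ≃ₐ[ℚ] L)) :=
      fun g => hall g.1
    rw [hbot, IntermediateField.mem_bot] at hx'
    obtain ⟨q, hq⟩ := hx'
    exact ⟨q, by rw [← hq]; exact (eq_ratCast ((algebraMap ℚ L)) q).symm⟩
  -- σ α = -α
  have hσα : σ α = -α := by
    have h2 : (σ α) ^ 2 = α ^ 2 := by
      rw [← map_pow, hα, map_ratCast]
    rcases sq_eq_sq_iff_eq_or_eq_neg.mp h2 with h | h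
    · exfalso
      obtain ⟨q, hq⟩ := hfix α h
      refine hDsq ⟨q, ?_⟩
      have : ((q * q : ℚ) : L) = (D : L) := by push_cast; rw [hq, ← hα]; ring
      exact_mod_cast (Rat.cast_injective this).symm
    · exact h
  have hσ4 : ∀ x : L, (σ ^ 4) x = x := by
    intro x; rw [← hord, pow_orderOf_eq_one]; rfl
  have hsq2 : ∀ y : L, (σ ^ 2) y = σ (σ y) := by
    intro y; rw [pow_two, AlgEquiv.mul_apply]
  -- a nonzero γ with σ² γ = -γ
  obtain ⟨γ, hγ0, hτγ⟩ : ∃ γ : L, γ ≠ 0 ∧ (σ ^ 2) γ = -γ := by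
    have hne : σ ^ 2 ≠ 1 := by
      intro h1
      have := orderOf_dvd_of_pow_eq_one h1
      rw [hord] at this
      omega
    obtain ⟨x, hx⟩ : ∃ x : L, (σ ^ 2) x ≠ x := by
      by_contra hc
      push_neg at hc
      exact hne (AlgEquiv.ext hc)
    refine ⟨x - (σ ^ 2) x, sub_ne_zero.mpr (Ne.symm hx), ?_⟩
    have h4 : (σ ^ 2) ((σ ^ 2) x) = x := by
      have : (σ ^ 2) ((σ ^ 2) x) = (σ ^ 4) x := by
        rw [show (4 : ℕ) = 2 + 2 by norm_num, pow_add, AlgEquiv.mul_apply]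
      rw [this, hσ4]
    rw [map_sub, h4]; ring
  obtain ⟨v, hv0, hvγ⟩ : ∃ v : L, v ≠ 0 ∧ σ γ = v * γ :=
    ⟨σ γ / γ, div_ne_zero (fun h => hγ0 ((map_eq_zero_iff σ σ.injective).mp h)) hγ0,
      (div_mul_cancel₀ _ hγ0).symm⟩
  have hτγ' : σ (σ γ) = -γ := by rw [← hsq2, hτγ]
  have hkey : σ v * v = -1 := by
    have h1 : σ (σ γ) = σ v * (v * γ) := by rw [hvγ, map_mul, hvγ]
    refine mul_right_cancel₀ hγ0 ?_
    rw [mul_assoc, ← h1, hτγ']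
    ring
  have hσ2v : (σ ^ 2) v = v := by
    have h1 : (σ ^ 2) (σ γ) = σ ((σ ^ 2) γ) := by rw [hsq2, hsq2]
    have h2 : (σ ^ 2) (σ γ) = (σ ^ 2) v * (-γ) := by rw [hvγ, map_mul, hτγ]
    have h3 : σ ((σ ^ 2) γ) = -(v * γ) := by rw [hτγ, map_neg, hvγ]
    refine mul_right_cancel₀ (neg_ne_zero.mpr hγ0) ?_
    rw [← h2, h1, h3]; ring
  have hσσv : σ (σ v) = v := by rw [← hsq2, hσ2v]
  -- s and t
  obtain ⟨s, hs⟩ : ∃ q : ℚ, (q : L) = v + σ v := by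
    apply hfix
    rw [map_add, hσσv, add_comm]
  obtain ⟨t, htL⟩ : ∃ q : ℚ, (q : L) = (v - σ v) / α := by
    apply hfix
    rw [map_div₀, map_sub, hσσv, hσα, div_neg, ← neg_div, neg_sub]
  have htα : (t : L) * α = v - σ v := by
    rw [htL, div_mul_cancel₀ _ hα0]
  -- the key rational equation
  have hLeq : ((s ^ 2 - t ^ 2 * D : ℚ) : L) = ((-4 : ℚ) : L) := by
    push_cast
    rw [hs, ← hα]
    have : (t : L) ^ 2 * α ^ 2 = ((t : L) * α) ^ 2 := by ring
    rw [this, htα]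
    linear_combination (4 : L) * hkey
  have hQeq : s ^ 2 - t ^ 2 * D = -4 := Rat.cast_injective hLeq
  have ht0 : t ≠ 0 := by
    intro h
    rw [h] at hQeq
    nlinarith [sq_nonneg s]
  exact ⟨s, t, ht0, by linarith⟩

/-- If `D` is a nonzero non-square rational number and `ℚ(√D)` embeds into a number field
`L` that is Galois over `ℚ` with cyclic Galois group of order `4` (equivalently, `D` becomes
a square in `L`), then `D > 0` and every prime `p ≡ 3 (mod 4)` occurs in `D` with even
exponent. -/
theorem quadratic_in_cyclic_quartic {D : ℚ} (hD0 : D ≠ 0) (hDsq : ¬IsSquare D)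
    (L : Type*) [Field L] [NumberField L] [Algebra ℚ L] [IsGalois ℚ L]
    [IsCyclic (L ≃ₐ[ℚ] L)] (hcard : Nat.card (L ≃ₐ[ℚ] L) = 4)
    (hembed : ∃ α : L, α ^ 2 = (D : L)) :
    0 < D ∧ ∀ p : ℕ, p.Prime → p % 4 = 3 → Even (padicValRat p D) := by
  obtain ⟨s, t, ht0, heq⟩ := aux_gal hD0 hDsq L hcard hembed
  exact aux_nt hD0 ht0 heq
end

section
/- Let D be a nonzero rational number that is not a square, and suppose Q(√D) embeds into a number field L that is Galois over Q with cyclic Galois group of order 8. Then D > 0, every prime p ≡ 3 (mod 4) occurs in D with even exponent, and every prime p ≡ 5 (mod 8) occurs in D with even exponent. -/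
set_option linter.unusedSectionVars false

section Helpers

variable {p : ℕ} [hp : Fact p.Prime]

lemma den_not_dvd_of_vnn {q : ℚ} (h : 0 ≤ padicValRat p q) : ¬ (p ∣ q.den) := by
  intro hdvd
  have h1 : 1 ≤ padicValNat p q.den := one_le_padicValNat_of_dvd q.den_nz hdvd
  have hnum : ¬ (p ∣ q.num.natAbs) := by
    intro hd
    have h3 := Nat.dvd_gcd hd hdvd
    rw [q.reduced] at h3
    exact hp.out.one_lt.ne' (Nat.eq_one_of_dvd_one h3)
  have h2 : padicValInt p q.num = 0 := padicValNat.eq_zero_of_not_dvd hnum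
  have : padicValRat p q = padicValInt p q.num - padicValNat p q.den := rfl
  omega

lemma cast_den_ne {q : ℚ} (h : 0 ≤ padicValRat p q) : ((q.den : ZMod p)) ≠ 0 := by
  rw [Ne, ZMod.natCast_eq_zero_iff]
  exact den_not_dvd_of_vnn h

lemma cast_eq_zero_of_val_pos {q : ℚ} (h : 1 ≤ padicValRat p q) : (q : ZMod p) = 0 := by
  rcases eq_or_ne q 0 with rfl | hq
  · simp
  have hden : ¬ (p ∣ q.den) := den_not_dvd_of_vnn (le_trans zero_le_one h)
  have hdv : padicValNat p q.den = 0 := padicValNat.eq_zero_of_not_dvd hden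
  have hdef : padicValRat p q = padicValInt p q.num - padicValNat p q.den := rfl
  have h1 : 1 ≤ padicValNat p q.num.natAbs := by
    unfold padicValInt at hdef; omega
  have hnum : p ∣ q.num.natAbs := by
    rw [dvd_iff_padicValNat_ne_zero (Int.natAbs_ne_zero.mpr (Rat.num_ne_zero.mpr hq))]
    omega
  have hnum' : ((q.num : ZMod p)) = 0 := by
    rw [ZMod.intCast_zmod_eq_zero_iff_dvd]
    exact (Int.natAbs_dvd_natAbs.mp (by simpa using hnum))
  rw [Rat.cast_def, hnum', zero_div]

lemma cast_sub_vnn {q r : ℚ} (hq : 0 ≤ padicValRat p q) (hr : 0 ≤ padicValRat p r) :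
    ((q - r : ℚ) : ZMod p) = (q : ZMod p) - (r : ZMod p) :=
  Rat.cast_sub_of_ne_zero (cast_den_ne hq) (cast_den_ne hr)

lemma cast_add_vnn {q r : ℚ} (hq : 0 ≤ padicValRat p q) (hr : 0 ≤ padicValRat p r) :
    ((q + r : ℚ) : ZMod p) = (q : ZMod p) + (r : ZMod p) :=
  Rat.cast_add_of_ne_zero (cast_den_ne hq) (cast_den_ne hr)

lemma cast_sq_vnn {q : ℚ} (hq : 0 ≤ padicValRat p q) :
    ((q ^ 2 : ℚ) : ZMod p) = (q : ZMod p) ^ 2 := by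
  rw [sq, sq, Rat.cast_mul_of_ne_zero (cast_den_ne hq) (cast_den_ne hq)]

end Helpers

section Quadv

variable {p : ℕ} [hp : Fact p.Prime]

private lemma valneg1 : padicValRat p (-1 : ℚ) = 0 := by
  rw [show ((-1:ℚ)) = -(1:ℚ) by norm_num, padicValRat.neg, padicValRat.one]

lemma quadv {D : ℚ} (hD0 : D ≠ 0) (hodd : Odd (padicValRat p D))
    {c A B : ℚ} (hc : c = 1 ∨ c = -1) (hne : A^2 + c*(D*B^2) ≠ 0) :
    (A ≠ 0 → padicValRat p (A^2 + c*(D*B^2)) ≤ 2*padicValRat p A) ∧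
    (B ≠ 0 → padicValRat p (A^2 + c*(D*B^2)) ≤ padicValRat p D + 2*padicValRat p B) ∧
    (Even (padicValRat p (A^2+c*(D*B^2))) →
        A ≠ 0 ∧ padicValRat p (A^2+c*(D*B^2)) = 2*padicValRat p A) ∧
    (Odd (padicValRat p (A^2+c*(D*B^2))) →
        B ≠ 0 ∧ padicValRat p (A^2+c*(D*B^2)) = padicValRat p D + 2*padicValRat p B) := by
  obtain ⟨k, hk⟩ := hodd
  have hVc : padicValRat p c = 0 := by
    rcases hc with rfl | rfl
    · exact padicValRat.one
    · exact valneg1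
  have hc0 : c ≠ 0 := by rcases hc with rfl | rfl <;> norm_num
  rcases eq_or_ne B 0 with rfl | hB
  · have hE : A^2 + c*(D*0^2) = A^2 := by ring
    rw [hE] at hne ⊢
    have hA : A ≠ 0 := by intro h; rw [h] at hne; simp at hne
    have VA2 : padicValRat p (A^2) = 2 * padicValRat p A := by
      rw [padicValRat.pow A]; ring
    refine ⟨fun _ => le_of_eq VA2, fun hB0 => absurd rfl hB0, fun _ => ⟨hA, VA2⟩,
      fun hOddW => ?_⟩
    exfalso
    obtain ⟨j, hj⟩ := hOddW
    omega
  · have VCB : padicValRat p (c*(D*B^2)) = padicValRat p D + 2*padicValRat p B := by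
      rw [padicValRat.mul hc0 (mul_ne_zero hD0 (pow_ne_zero 2 hB)),
        padicValRat.mul hD0 (pow_ne_zero 2 hB), padicValRat.pow B, hVc]; ring
    rcases eq_or_ne A 0 with rfl | hA
    · have hE : (0:ℚ)^2 + c*(D*B^2) = c*(D*B^2) := by ring
      rw [hE] at hne ⊢
      refine ⟨fun hA0 => absurd rfl hA0, fun _ => le_of_eq VCB, fun hEv => ?_, fun _ => ⟨hB, VCB⟩⟩
      exfalso
      obtain ⟨j, hj⟩ := hEv
      rw [VCB] at hj
      omega
    · have hA2 : A^2 ≠ 0 := pow_ne_zero 2 hA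
      have hCB : c*(D*B^2) ≠ 0 := mul_ne_zero hc0 (mul_ne_zero hD0 (pow_ne_zero 2 hB))
      have VA2 : padicValRat p (A^2) = 2 * padicValRat p A := by
        rw [padicValRat.pow A]; ring
      have hne' : padicValRat p (A^2) ≠ padicValRat p (c*(D*B^2)) := by
        rw [VA2, VCB]; omega
      have hmin := padicValRat.add_eq_min (p := p) hne hA2 hCB hne'
      rcases min_cases (padicValRat p (A^2)) (padicValRat p (c*(D*B^2))) with ⟨h1, h2⟩ | ⟨h1, h2⟩ <;>
        rw [h1] at hmin
      · refine ⟨fun _ => ?_, fun _ => ?_, fun hEv => ⟨hA, ?_⟩, fun hOddW => ⟨hB, ?_⟩⟩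
        · rw [hmin, VA2]
        · rw [hmin, VA2]; rw [VA2, VCB] at h2; omega
        · rw [hmin, VA2]
        · exfalso; obtain ⟨j, hj⟩ := hOddW; rw [hmin, VA2] at hj; omega
      · refine ⟨fun _ => ?_, fun _ => ?_, fun hEv => ⟨hA, ?_⟩, fun hOddW => ⟨hB, ?_⟩⟩
        · rw [hmin, VCB]; rw [VA2, VCB] at h2; omega
        · rw [hmin, VCB]
        · exfalso; obtain ⟨j, hj⟩ := hEv; rw [hmin, VCB] at hj; omega
        · rw [hmin, VCB]

end Quadv

section Key

variable {p : ℕ} [hp : Fact p.Prime]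

lemma val_sub_eq_left {q r : ℚ} (hq : q ≠ 0) (hr : r ≠ 0)
    (h : padicValRat p q < padicValRat p r) : padicValRat p (q - r) = padicValRat p q := by
  have hne : q + -r ≠ 0 := by
    intro he
    have : q = r := by linarith [sub_eq_zero.mp (by linear_combination he : q - r = 0)]
    rw [this] at h; exact lt_irrefl _ h
  rw [sub_eq_add_neg,
    padicValRat.add_eq_of_lt hne hq (neg_ne_zero.mpr hr) (by rw [padicValRat.neg]; exact h)]

lemma val_sub_eq_right {q r : ℚ} (hq : q ≠ 0) (hr : r ≠ 0)
    (h : padicValRat p r < padicValRat p q) : padicValRat p (q - r) = padicValRat p r := by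
  have hne : -r + q ≠ 0 := by
    intro he
    have : q = r := by linarith [sub_eq_zero.mp (by linear_combination he : q - r = 0)]
    rw [this] at h; exact lt_irrefl _ h
  rw [sub_eq_neg_add,
    padicValRat.add_eq_of_lt hne (neg_ne_zero.mpr hr) hq (by rw [padicValRat.neg]; exact h),
    padicValRat.neg]

theorem keyOdd {D : ℚ} (hD0 : D ≠ 0) (hDsq : ¬ IsSquare D) {x y v s₁ s₂ t₁ t₂ m n : ℚ}
    (hv : v ≠ 0)
    (h1 : x^2 - D*y^2 = D*v^2)
    (hm : m = s₁^2 + D*s₂^2 - ((t₁^2 + D*t₂^2)*x + 2*D*t₁*t₂*y))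
    (hn : n = 2*s₁*s₂ - ((t₁^2 + D*t₂^2)*y + 2*t₁*t₂*x))
    (h2 : m^2 - D*n^2 = -1)
    (hp2 : p ≠ 2) (hodd : Odd (padicValRat p D)) :
    p % 8 = 1 := by
  obtain ⟨k, hk⟩ := hodd
  have hodd' : Odd (padicValRat p D) := ⟨k, hk⟩
  have nsq : ∀ a b : ℚ, a^2 - D*b^2 = 0 → a = 0 ∧ b = 0 := by
    intro a b h
    rcases eq_or_ne b 0 with rfl | hb
    · refine ⟨?_, rfl⟩
      have h' : a^2 = 0 := by linear_combination h
      exact pow_eq_zero_iff (two_ne_zero) |>.mp h'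
    · exact absurd ⟨a/b, by field_simp; linear_combination -h⟩ hDsq
  have hn0 : n ≠ 0 := by
    intro h
    rw [h] at h2
    nlinarith [sq_nonneg m]
  have hDpos : 0 < D := by
    by_contra hD
    push_neg at hD
    nlinarith [sq_nonneg m, sq_nonneg n, mul_nonneg (neg_nonneg.mpr hD) (sq_nonneg n)]
  -- step 1 : valuation of m and n
  have hE1 : m^2 + (-1)*(D*n^2) = -1 := by linear_combination h2
  have hne1 : m^2 + (-1)*(D*n^2) ≠ 0 := by rw [hE1]; norm_num
  obtain ⟨q1a, q1b, q1c, q1d⟩ := quadv hD0 hodd' (Or.inr rfl) hne1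
  rw [hE1, valneg1] at q1b q1c
  obtain ⟨hm0, hVm2⟩ := q1c Even.zero
  have hVm : padicValRat p m = 0 := by omega
  have hVn : 1 ≤ padicValRat p D + 2*padicValRat p n := by
    have := q1b hn0; omega
  -- degenerate case t = 0
  by_cases htz : t₁ = 0 ∧ t₂ = 0
  · obtain ⟨rfl, rfl⟩ := htz
    subst hm hn
    have h' : (s₁^2 - D*s₂^2)^2 = -1 := by linear_combination h2
    nlinarith [sq_nonneg (s₁^2 - D*s₂^2)]
  -- degenerate case s = 0
  by_cases hsz : s₁ = 0 ∧ s₂ = 0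
  · obtain ⟨rfl, rfl⟩ := hsz
    subst hm hn
    have h' : (t₁^2 - D*t₂^2)^2 * (D*v^2) = -1 := by
      linear_combination h2 - (t₁^2 - D*t₂^2)^2 * h1
    nlinarith [mul_nonneg (mul_nonneg (sq_nonneg (t₁^2 - D*t₂^2)) hDpos.le) (sq_nonneg v)]
  have hNs : s₁^2 - D*s₂^2 ≠ 0 := fun h => hsz (nsq _ _ h)
  have hNt : t₁^2 - D*t₂^2 ≠ 0 := fun h => htz (nsq _ _ h)
  -- quadv on (S₁, S₂)
  have hES : (s₁^2 + D*s₂^2)^2 + (-1)*(D*(2*s₁*s₂)^2) = (s₁^2 - D*s₂^2)^2 := by ring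
  have hneS : (s₁^2 + D*s₂^2)^2 + (-1)*(D*(2*s₁*s₂)^2) ≠ 0 := by
    rw [hES]; exact pow_ne_zero _ hNs
  obtain ⟨qSa, qSb, qSc, qSd⟩ := quadv hD0 hodd' (Or.inr rfl) hneS
  have VNs2 : padicValRat p ((s₁^2 - D*s₂^2)^2) = 2 * padicValRat p (s₁^2 - D*s₂^2) := by
    rw [padicValRat.pow (s₁^2 - D*s₂^2)]; ring
  rw [hES, VNs2] at qSa qSb qSc qSd
  obtain ⟨hS₁ne, hVS₁⟩ := qSc ⟨padicValRat p (s₁^2 - D*s₂^2), by ring⟩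
  -- quadv on (T₁, T₂)
  have hET : ((t₁^2+D*t₂^2)*x + 2*D*t₁*t₂*y)^2
      + (-1)*(D*((t₁^2+D*t₂^2)*y + 2*t₁*t₂*x)^2) = (t₁^2 - D*t₂^2)^2*(D*v^2) := by
    linear_combination (t₁^2 - D*t₂^2)^2 * h1
  have hneT : ((t₁^2+D*t₂^2)*x + 2*D*t₁*t₂*y)^2
      + (-1)*(D*((t₁^2+D*t₂^2)*y + 2*t₁*t₂*x)^2) ≠ 0 := by
    rw [hET]; exact mul_ne_zero (pow_ne_zero _ hNt) (mul_ne_zero hD0 (pow_ne_zero _ hv))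
  obtain ⟨qTa, qTb, qTc, qTd⟩ := quadv hD0 hodd' (Or.inr rfl) hneT
  have VNT : padicValRat p ((t₁^2 - D*t₂^2)^2*(D*v^2))
      = 2*padicValRat p (t₁^2 - D*t₂^2) + (padicValRat p D + 2*padicValRat p v) := by
    rw [padicValRat.mul (pow_ne_zero _ hNt) (mul_ne_zero hD0 (pow_ne_zero _ hv)),
      padicValRat.mul hD0 (pow_ne_zero _ hv), padicValRat.pow (t₁^2 - D*t₂^2), padicValRat.pow v]
    ring
  rw [hET, VNT] at qTa qTb qTc qTd
  obtain ⟨hT₂ne, hVT₂⟩ := qTd ⟨padicValRat p (t₁^2 - D*t₂^2) + k + padicValRat p v, by omega⟩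
  set a := padicValRat p D with ha
  set WS := padicValRat p (s₁^2 - D*s₂^2) with hWSd
  set WT := 2*padicValRat p (t₁^2 - D*t₂^2) + (a + 2*padicValRat p v) with hWTd
  set S₁ := s₁^2 + D*s₂^2 with hS1d
  set S₂ := 2*s₁*s₂ with hS2d
  set T₁ := (t₁^2+D*t₂^2)*x + 2*D*t₁*t₂*y with hT1d
  set T₂ := (t₁^2+D*t₂^2)*y + 2*t₁*t₂*x with hT2d
  have hVS1' : padicValRat p S₁ = WS := by omega
  rcases lt_trichotomy WT (2*WS) with hlt | heqc | hgt
  · -- impossible : WT < 2*WS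
    exfalso
    have hVn2 : a + 2*padicValRat p n = WT := by
      by_cases hS2z : S₂ = 0
      · have hnT : n = -T₂ := by rw [hn, hS2z]; ring
        rw [hnT, padicValRat.neg]; omega
      · have h1' := qSb hS2z
        have hlt2 : padicValRat p T₂ < padicValRat p S₂ := by omega
        have hvn : padicValRat p n = padicValRat p T₂ := by
          rw [hn]; exact val_sub_eq_right hS2z hT₂ne hlt2
        omega
    have hWTpos : 1 ≤ WT := by omega
    have hWSpos : 1 ≤ WS := by omega
    by_cases hT1z : T₁ = 0
    · have hmS : m = S₁ := by rw [hm, hT1z]; ring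
      rw [hmS] at hVm
      omega
    · have hVT1 : 1 ≤ padicValRat p T₁ := by have := qTa hT1z; omega
      have hmin := padicValRat.min_le_padicValRat_add (p := p) (q := S₁) (r := -T₁)
        (by rw [← sub_eq_add_neg, ← hm]; exact hm0)
      rw [padicValRat.neg] at hmin
      rw [hm, sub_eq_add_neg] at hVm
      omega
  · exfalso; omega
  · -- main case : 2*WS < WT
    have key1 : WS = 0 ∧ (T₁ = 0 ∨ 1 ≤ padicValRat p T₁) := by
      by_cases hT1z : T₁ = 0
      · have hmS : m = S₁ := by rw [hm, hT1z]; ring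
        rw [hmS] at hVm
        exact ⟨by omega, Or.inl hT1z⟩
      · have hT1b := qTa hT1z
        have hlt2 : padicValRat p S₁ < padicValRat p T₁ := by omega
        have hvm : padicValRat p m = padicValRat p S₁ := by
          rw [hm]; exact val_sub_eq_left hS₁ne hT1z hlt2
        exact ⟨by omega, Or.inr (by omega)⟩
    obtain ⟨hWS0, hT1cases⟩ := key1
    have hVS1_0 : padicValRat p S₁ = 0 := by omega
    -- decompose S₁
    have hES1 : s₁^2 + 1*(D*s₂^2) = S₁ := by rw [hS1d]; ring
    have hneS1 : s₁^2 + 1*(D*s₂^2) ≠ 0 := by rw [hES1]; exact hS₁ne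
    obtain ⟨qsa, qsb, qsc, qsd⟩ := quadv hD0 hodd' (Or.inl rfl) hneS1
    rw [hES1] at qsb qsc
    obtain ⟨hs₁ne, hVs₁2⟩ := qsc (by rw [hVS1_0]; exact Even.zero)
    have hVs₁ : padicValRat p s₁ = 0 := by omega
    have hDs₂ : s₂ = 0 ∨ 1 ≤ padicValRat p (D*s₂^2) := by
      rcases eq_or_ne s₂ 0 with rfl | hs2
      · exact Or.inl rfl
      · refine Or.inr ?_
        have hb := qsb hs2
        have hmul : padicValRat p (D*s₂^2) = a + 2*padicValRat p s₂ := by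
          rw [padicValRat.mul hD0 (pow_ne_zero _ hs2), padicValRat.pow s₂, ← ha]; push_cast; ring
        omega
    -- cast to ZMod p
    have e1 : m - s₁^2 = D*s₂^2 - T₁ := by rw [hm, hS1d]; ring
    have hVs₁sq : 0 ≤ padicValRat p (s₁^2) := by rw [padicValRat.pow s₁]; omega
    have hVmnn : 0 ≤ padicValRat p m := le_of_eq hVm.symm
    have hcastL : ((m - s₁^2 : ℚ) : ZMod p) = (m : ZMod p) - ((s₁ : ZMod p))^2 := by
      rw [cast_sub_vnn hVmnn hVs₁sq, cast_sq_vnn (le_of_eq hVs₁.symm)]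
    have hcastDs₂ : ((D*s₂^2 : ℚ) : ZMod p) = 0 := by
      rcases hDs₂ with rfl | h
      · norm_num
      · exact cast_eq_zero_of_val_pos h
    have hcastT₁ : ((T₁ : ℚ) : ZMod p) = 0 := by
      rcases hT1cases with h | h
      · rw [h]; exact Rat.cast_zero
      · exact cast_eq_zero_of_val_pos h
    have hVDs₂nn : 0 ≤ padicValRat p (D*s₂^2) := by
      rcases hDs₂ with rfl | h
      · norm_num
      · omega
    have hVT₁nn : 0 ≤ padicValRat p T₁ := by
      rcases hT1cases with h | h
      · rw [h]; simp
      · omega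
    have hcastR : ((D*s₂^2 - T₁ : ℚ) : ZMod p) = 0 := by
      rw [cast_sub_vnn hVDs₂nn hVT₁nn, hcastDs₂, hcastT₁]; ring
    have hms₁ : (m : ZMod p) = ((s₁ : ZMod p))^2 := by
      have h' : (m : ZMod p) - ((s₁ : ZMod p))^2 = 0 := by
        rw [← hcastL, e1, hcastR]
      exact sub_eq_zero.mp h'
    have em : m^2 + 1 = D*n^2 := by linear_combination h2
    have hVmsq : padicValRat p (m^2) = 0 := by rw [padicValRat.pow m, hVm]; ring
    have hVm21 : 1 ≤ padicValRat p (m^2+1) := by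
      rw [em, padicValRat.mul hD0 (pow_ne_zero _ hn0), padicValRat.pow n]
      omega
    have hcast3 : ((m^2 + 1 : ℚ) : ZMod p) = (m : ZMod p)^2 + 1 := by
      rw [cast_add_vnn (le_of_eq hVmsq.symm) (by rw [padicValRat.one]),
        cast_sq_vnn hVmnn, Rat.cast_one]
    have hm2neg : ((m : ZMod p))^2 = -1 := by
      have h0 : ((m^2 + 1 : ℚ) : ZMod p) = 0 := cast_eq_zero_of_val_pos hVm21
      rw [hcast3] at h0
      linear_combination h0
    have hc4 : ((s₁ : ZMod p))^4 = -1 := by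
      rw [show ((s₁ : ZMod p))^4 = (((s₁ : ZMod p))^2)^2 by ring, ← hms₁, hm2neg]
    have hne11 : ((-1 : ZMod p)) ≠ 1 := by
      intro h
      have h2' : ((2 : ℕ) : ZMod p) = 0 := by push_cast; linear_combination -h
      rw [ZMod.natCast_eq_zero_iff] at h2'
      exact hp2 ((Nat.prime_dvd_prime_iff_eq hp.out Nat.prime_two).mp h2')
    have hs₁0 : (s₁ : ZMod p) ≠ 0 := by
      intro h
      rw [h] at hc4
      have h1' : (1 : ZMod p) = 0 := by linear_combination hc4
      exact one_ne_zero h1'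
    have hord : orderOf ((s₁ : ZMod p)) = 8 := by
      have h8 : ((s₁ : ZMod p))^(2^3) = 1 := by
        rw [show (2^3 : ℕ) = 8 from rfl,
          show ((s₁ : ZMod p))^8 = (((s₁ : ZMod p))^4)^2 by ring, hc4]
        ring
      have h4 : ((s₁ : ZMod p))^(2^2) ≠ 1 := by
        rw [show (2^2 : ℕ) = 4 from rfl, hc4]; exact hne11
      simpa using orderOf_eq_prime_pow h4 h8
    have hdvd : (8 : ℕ) ∣ p - 1 := by
      rw [← hord]
      exact ZMod.orderOf_dvd_card_sub_one hs₁0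
    obtain ⟨j, hj⟩ := hdvd
    have := hp.out.two_le
    omega

end Key

theorem exists_data {D : ℚ} (hD0 : D ≠ 0) (hDsq : ¬IsSquare D)
    (L : Type*) [Field L] [NumberField L] [Algebra ℚ L] [IsGalois ℚ L]
    [IsCyclic (L ≃ₐ[ℚ] L)] (hcard : Nat.card (L ≃ₐ[ℚ] L) = 8)
    (hembed : ∃ α : L, α ^ 2 = (D : L)) :
    ∃ x y v s₁ s₂ t₁ t₂ m n : ℚ, v ≠ 0 ∧
      x^2 - D*y^2 = D*v^2 ∧
      m = s₁^2 + D*s₂^2 - ((t₁^2 + D*t₂^2)*x + 2*D*t₁*t₂*y) ∧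
      n = 2*s₁*s₂ - ((t₁^2 + D*t₂^2)*y + 2*t₁*t₂*x) ∧
      m^2 - D*n^2 = -1 := by
  obtain ⟨α, hα2⟩ := hembed
  haveI : FiniteDimensional ℚ L := by
    have h := Subsingleton.elim (DivisionRing.toRatAlgebra : Algebra ℚ L) ‹Algebra ℚ L›
    have h2 := NumberField.to_finiteDimensional (K := L)
    rwa [h] at h2
  obtain ⟨σ, hσ⟩ := IsCyclic.exists_generator (α := L ≃ₐ[ℚ] L)
  have horder : orderOf σ = 8 := by rw [orderOf_eq_card_of_forall_mem_zpowers hσ, hcard]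
  have hσ8 : σ^8 = 1 := by rw [← horder]; exact pow_orderOf_eq_one σ
  have hσ4 : σ^4 ≠ 1 := by
    intro h
    have h' := orderOf_dvd_of_pow_eq_one h
    rw [horder] at h'
    have := Nat.le_of_dvd (by norm_num) h'
    omega
  -- every σ-fixed element is rational
  have ratOf : ∀ z : L, σ z = z → ∃ q : ℚ, z = (q : L) := by
    intro z hz
    have hall : ∀ τ : L ≃ₐ[ℚ] L, τ z = z := by
      intro τ
      have hσmem : σ ∈ MulAction.stabilizer (L ≃ₐ[ℚ] L) z := hz
      have hle : Subgroup.zpowers σ ≤ MulAction.stabilizer (L ≃ₐ[ℚ] L) z :=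
        Subgroup.zpowers_le.mpr hσmem
      exact hle (hσ τ)
    have hBot : IntermediateField.fixedField (⊤ : Subgroup (L ≃ₐ[ℚ] L)) = ⊥ := by
      have h1 : IntermediateField.fixingSubgroup (⊥ : IntermediateField ℚ L) = ⊤ := by
        refine eq_top_iff.mpr fun τ _ => ?_
        rw [IntermediateField.fixingSubgroup, mem_fixingSubgroup_iff]
        intro x hx
        obtain ⟨q, rfl⟩ := IntermediateField.mem_bot.mp hx
        exact τ.commutes q
      rw [← h1, IsGalois.fixedField_fixingSubgroup]
    have hfix : z ∈ IntermediateField.fixedField (⊤ : Subgroup (L ≃ₐ[ℚ] L)) := fun g => hall g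
    rw [hBot, IntermediateField.mem_bot] at hfix
    obtain ⟨q, hq⟩ := hfix
    exact ⟨q, by rw [← hq]; exact eq_ratCast (algebraMap ℚ L) q⟩
  have hαQ : ∀ q : ℚ, α ≠ (q:L) := by
    intro q h
    apply hDsq
    have h1 : ((q*q : ℚ) : L) = ((D:ℚ):L) := by
      push_cast
      rw [← h]
      linear_combination hα2
    exact ⟨q, (Rat.cast_injective h1).symm⟩
  have hα0 : α ≠ 0 := by
    intro h
    rw [h] at hα2
    have : ((D:ℚ):L) = ((0:ℚ):L) := by push_cast; linear_combination -hα2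
    exact hD0 (Rat.cast_injective this)
  have hσcast : ∀ q : ℚ, σ ((q:L)) = (q:L) := fun q => map_ratCast σ q
  have hσα : σ α = -α := by
    have h1 : (σ α)^2 = α^2 := by
      rw [← map_pow, hα2, map_ratCast σ D, ← hα2]
    have h2 : (σ α - α) * (σ α + α) = 0 := by linear_combination h1
    rcases mul_eq_zero.mp h2 with h | h
    · exfalso
      obtain ⟨q, hq⟩ := ratOf α (sub_eq_zero.mp h)
      exact hαQ q hq
    · exact eq_neg_of_add_eq_zero_left h
  have happ : ∀ (i j : ℕ) (w : L), (σ^i) ((σ^j) w) = (σ^(i+j)) w := by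
    intro i j w
    rw [pow_add, AlgEquiv.mul_apply]
  have e21 : ∀ w : L, (σ^2) (σ w) = σ ((σ^2) w) := by
    intro w
    have a1 := happ 2 1 w
    have a2 := happ 1 2 w
    rw [pow_one] at a1 a2
    rw [a1, a2]
  have e41 : ∀ w : L, (σ^4) (σ w) = σ ((σ^4) w) := by
    intro w
    have a1 := happ 4 1 w
    have a2 := happ 1 4 w
    rw [pow_one] at a1 a2
    rw [a1, a2]
  -- anti-fixed vector of σ^4
  obtain ⟨z0, hz0⟩ : ∃ z : L, (σ^4) z ≠ z := by
    by_contra h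
    push_neg at h
    exact hσ4 (AlgEquiv.ext h)
  set δ := z0 - (σ^4) z0 with hδd
  have hδ0 : δ ≠ 0 := sub_ne_zero.mpr (Ne.symm hz0)
  have hδ : (σ^4) δ = -δ := by
    rw [hδd, map_sub, happ 4 4]
    have h8' : (σ^(4+4)) z0 = z0 := by
      norm_num [hσ8]
    rw [h8']
    ring
  -- β with (σ^2) β = -β
  set β := δ * (σ^2) δ with hβd
  have hσ2δ0 : (σ^2) δ ≠ 0 := fun h => hδ0 ((σ^2).injective (by rw [h, map_zero]))
  have hβ0 : β ≠ 0 := mul_ne_zero hδ0 hσ2δ0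
  have hβ : (σ^2) β = -β := by
    rw [hβd, map_mul, happ 2 2]
    have h4' : (σ^(2+2)) δ = -δ := by norm_num [hδ]
    rw [h4']
    ring
  -- coordinates of σ²-fixed elements
  have coordOf : ∀ z : L, (σ^2) z = z → ∃ a b : ℚ, z = (a:L) + (b:L)*α := by
    intro z hz
    have h2 : σ (σ z) = z := by
      have a1 := happ 1 1 z
      rw [pow_one] at a1
      rw [a1]
      exact hz
    have h1 : σ (z + σ z) = z + σ z := by
      rw [map_add, h2]
      ring
    obtain ⟨qa, hqa⟩ := ratOf _ h1
    have h3 : σ ((z - σ z)/α) = (z - σ z)/α := by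
      rw [map_div₀, map_sub, h2, hσα, div_neg, ← neg_div, neg_sub]
    obtain ⟨qb, hqb⟩ := ratOf _ h3
    refine ⟨qa/2, qb/2, ?_⟩
    have hb' : z - σ z = (qb:L) * α := by
      rw [← hqb]
      field_simp
    push_cast
    have hqa' : z + σ z = (qa:L) := hqa
    linear_combination (hqa' + hb')/2
  -- uniqueness of coordinates
  have huniq : ∀ a b a' b' : ℚ, (a:L) + (b:L)*α = (a':L) + (b':L)*α → a = a' ∧ b = b' := by
    intro a b a' b' h
    by_cases hbb : b = b'
    · subst hbb
      have h' : ((a:ℚ):L) = ((a':ℚ):L) := by linear_combination h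
      exact ⟨Rat.cast_injective h', rfl⟩
    · exfalso
      apply hαQ ((a - a')/(b' - b))
      have hbne : ((b':L) - (b:L)) ≠ 0 := by
        intro h0
        apply hbb
        symm
        exact Rat.cast_injective (by push_cast; linear_combination h0 : ((b':ℚ):L) = ((b:ℚ):L))
      push_cast
      rw [eq_div_iff hbne]
      linear_combination -h
  -- r = β² coordinates
  have hr2 : (σ^2) (β^2) = β^2 := by rw [map_pow, hβ]; ring
  obtain ⟨x, y, hxy⟩ := coordOf _ hr2
  -- γ = β σβ
  have hσβ0 : σ β ≠ 0 := fun h => hβ0 (σ.injective (by rw [h, map_zero]))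
  have hγ2 : (σ^2) (β * σ β) = β * σ β := by
    rw [map_mul, e21 β, hβ, map_neg]
    ring
  obtain ⟨u, v, huv⟩ := coordOf _ hγ2
  have hσγ : σ (β * σ β) = -(β * σ β) := by
    rw [map_mul]
    have h11 : σ (σ β) = (σ^2) β := by
      have a1 := happ 1 1 β
      rw [pow_one] at a1
      exact a1
    rw [h11, hβ]
    ring
  have hu : u = 0 := by
    have h5 : σ ((u:L) + (v:L)*α) = -((u:L) + (v:L)*α) := by rw [← huv]; exact hσγ
    rw [map_add, map_mul, hσcast, hσcast, hσα] at h5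
    have h6 : ((u:ℚ):L) + ((-v:ℚ):L)*α = ((-u:ℚ):L) + ((-v:ℚ):L)*α := by
      push_cast
      linear_combination h5
    have h7 := (huniq _ _ _ _ h6).1
    linarith
  have hv0 : v ≠ 0 := by
    intro hv
    rw [hu, hv] at huv
    have : β * σ β = 0 := by rw [huv]; push_cast; ring
    rcases mul_eq_zero.mp this with h | h
    · exact hβ0 h
    · exact hσβ0 h
  -- equation 1
  have hγv : β * σ β = (v:L)*α := by rw [huv, hu]; push_cast; ring
  have heq1 : x^2 - D*y^2 = D*v^2 := by
    have hσr : σ (β^2) = (x:L) - (y:L)*α := by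
      rw [hxy, map_add, map_mul, hσcast, hσcast, hσα]
      ring
    have hrσr : β^2 * σ (β^2) = (β * σ β)^2 := by rw [map_pow]; ring
    have e : ((x:L) + (y:L)*α) * ((x:L) - (y:L)*α) = ((v:L)*α)^2 := by
      rw [← hxy, ← hσr, ← hγv]
      exact hrσr
    have hL : ((x^2 - D*y^2 : ℚ) : L) = ((D*v^2 : ℚ) : L) := by
      push_cast
      linear_combination e + ((y:L)^2 + (v:L)^2) * hα2
    exact Rat.cast_injective hL
  -- the element S = σδ/δ
  have ecomm : ∀ (k : ℕ) (w : L), (σ^k) (σ w) = σ ((σ^k) w) := by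
    intro k w
    have a1 := happ k 1 w
    have a2 := happ 1 k w
    rw [pow_one] at a1 a2
    rw [a1, a2, Nat.add_comm]
  set S := σ δ / δ with hSdef
  have hσδ0 : σ δ ≠ 0 := fun h => hδ0 (σ.injective (by rw [h, map_zero]))
  have hS0 : S ≠ 0 := div_ne_zero hσδ0 hδ0
  have hS4 : (σ^4) S = S := by
    rw [hSdef, map_div₀, ecomm 4 δ, hδ, map_neg]
    exact neg_div_neg_eq _ _
  have hd2 : σ (σ δ) = (σ^2) δ := by
    have a1 := happ 1 1 δ
    rw [pow_one] at a1
    exact a1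
  have hd3 : σ ((σ^2) δ) = (σ^3) δ := by
    have a1 := happ 1 2 δ
    rw [pow_one] at a1
    rw [a1]
  have hd4 : σ ((σ^3) δ) = -δ := by
    have a1 := happ 1 3 δ
    rw [pow_one] at a1
    rw [a1]
    norm_num [hδ]
  have hσ3δ0 : (σ^3) δ ≠ 0 := fun h => hδ0 ((σ^3).injective (by rw [h, map_zero]))
  have hNS : S * σ S * (σ^2) S * (σ^3) S = -1 := by
    have hA : σ S = (σ^2) δ / σ δ := by rw [hSdef, map_div₀, hd2]
    have hB : (σ^2) S = (σ^3) δ / (σ^2) δ := by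
      rw [hSdef, map_div₀, ecomm 2 δ, hd3]
    have hC : (σ^3) S = -δ / (σ^3) δ := by
      rw [hSdef, map_div₀, ecomm 3 δ, hd4]
    rw [hSdef, hA, hB, hC]
    field_simp
  -- decomposition of S
  have h4S : (σ^(2+2)) S = S := by norm_num [hS4]
  have hsfix : (σ^2) ((S + (σ^2) S)/2) = (S + (σ^2) S)/2 := by
    rw [map_div₀, map_add, happ 2 2, h4S, map_ofNat]
    ring
  obtain ⟨s₁, s₂, hs⟩ := coordOf _ hsfix
  have htfix : (σ^2) ((S - (σ^2) S)/(2*β)) = (S - (σ^2) S)/(2*β) := by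
    rw [map_div₀, map_sub, happ 2 2, h4S, map_mul, map_ofNat, hβ, mul_neg, div_neg, ← neg_div,
      neg_sub]
  obtain ⟨t₁, t₂, ht⟩ := coordOf _ htfix
  have hu'st : S * (σ^2) S = ((S + (σ^2) S)/2)^2 - ((S - (σ^2) S)/(2*β))^2 * β^2 := by
    field_simp
    ring
  have h3S : σ ((σ^2) S) = (σ^3) S := by
    have a1 := happ 1 2 S
    rw [pow_one] at a1
    rw [a1]
  have hprod : (S * (σ^2) S) * σ (S * (σ^2) S) = -1 := by
    rw [map_mul, h3S]
    linear_combination hNS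
  refine ⟨x, y, v, s₁, s₂, t₁, t₂, _, _, hv0, heq1, rfl, rfl, ?_⟩
  have hmn : S * (σ^2) S =
      ((s₁^2 + D*s₂^2 - ((t₁^2 + D*t₂^2)*x + 2*D*t₁*t₂*y) : ℚ):L)
        + ((2*s₁*s₂ - ((t₁^2 + D*t₂^2)*y + 2*t₁*t₂*x) : ℚ):L)*α := by
    rw [hu'st, hs, ht, hxy]
    push_cast
    linear_combination ((s₂:L)^2 - (t₂:L)^2*(x:L) - 2*(t₁:L)*(t₂:L)*(y:L)
      - (t₂:L)^2*(y:L)*α) * hα2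
  have hσu' : σ (S * (σ^2) S) =
      ((s₁^2 + D*s₂^2 - ((t₁^2 + D*t₂^2)*x + 2*D*t₁*t₂*y) : ℚ):L)
        - ((2*s₁*s₂ - ((t₁^2 + D*t₂^2)*y + 2*t₁*t₂*x) : ℚ):L)*α := by
    rw [hmn, map_add, map_mul, hσcast, hσcast, hσα]
    ring
  rw [hσu', hmn] at hprod
  have hL2 : (((s₁^2 + D*s₂^2 - ((t₁^2 + D*t₂^2)*x + 2*D*t₁*t₂*y))^2
      - D*(2*s₁*s₂ - ((t₁^2 + D*t₂^2)*y + 2*t₁*t₂*x))^2 : ℚ) : L) = ((-1 : ℚ) : L) := by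
    push_cast
    push_cast at hprod
    linear_combination hprod + (2*(s₁:L)*(s₂:L) - (((t₁:L)^2 + (D:L)*(t₂:L)^2)*(y:L) + 2*(t₁:L)*(t₂:L)*(x:L)))^2 * hα2
  exact Rat.cast_injective hL2


/-- If `D` is a nonzero non-square rational number and `ℚ(√D)` embeds into a number field
`L` that is Galois over `ℚ` with cyclic Galois group of order `8` (equivalently, `D` becomes
a square in `L`), then `D > 0`, every prime `p ≡ 3 (mod 4)` occurs in `D` with even
exponent, and every prime `p ≡ 5 (mod 8)` occurs in `D` with even exponent. -/
theorem quadratic_in_cyclic_octic {D : ℚ} (hD0 : D ≠ 0) (hDsq : ¬IsSquare D)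
    (L : Type*) [Field L] [NumberField L] [Algebra ℚ L] [IsGalois ℚ L]
    [IsCyclic (L ≃ₐ[ℚ] L)] (hcard : Nat.card (L ≃ₐ[ℚ] L) = 8)
    (hembed : ∃ α : L, α ^ 2 = (D : L)) :
    0 < D ∧ (∀ p : ℕ, p.Prime → p % 4 = 3 → Even (padicValRat p D)) ∧
      (∀ p : ℕ, p.Prime → p % 8 = 5 → Even (padicValRat p D)) := by
  obtain ⟨x, y, v, s₁, s₂, t₁, t₂, m, n, hv, h1, hm, hn, h2⟩ :=
    exists_data hD0 hDsq L hcard hembed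
  have hDpos : 0 < D := by
    have hn0 : n ≠ 0 := by
      intro h
      rw [h] at h2
      nlinarith [sq_nonneg m]
    by_contra hD
    push_neg at hD
    nlinarith [sq_nonneg m, sq_nonneg n, mul_nonneg (neg_nonneg.mpr hD) (sq_nonneg n)]
  refine ⟨hDpos, ?_, ?_⟩
  · intro p hp hp4
    haveI := Fact.mk hp
    rw [← Int.not_odd_iff_even]
    intro hodd
    have h8 := keyOdd hD0 hDsq hv h1 hm hn h2 (by omega : p ≠ 2) hodd
    omega
  · intro p hp hp8
    haveI := Fact.mk hp
    rw [← Int.not_odd_iff_even]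
    intro hodd
    have h8 := keyOdd hD0 hDsq hv h1 hm hn h2 (by omega : p ≠ 2) hodd
    omega
end

section
/- If six points p_1,...,p_6 ∈ P^2(K̄) are such that p_1, p_2, p_3, p_4 are distinct points on a common line l and p_5, p_6 ∉ l, then m_{125}^3 · m_{346}^3 ≠ 0 while every irrational invariant γ_{(i1i2i3)(i4i5i6)} = m_{i1i2i3} m_{i4i5i6} d_2 and γ_{(i1i2)(i3i4)(i5i6)} = m_{i1i3i4} m_{i2i3i4} m_{i3i5i6} m_{i4i5i6} m_{i5i1i2} m_{i6i1i2} vanishes. -/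
open Matrix

variable {K : Type*} [Field K] [IsAlgClosed K]

/-- The 3×3 minor `m_{ijk}`: determinant of the matrix with rows `x i`, `x j`, `x k`. -/
def minor3 (x : Fin 6 → Fin 3 → K) (i j k : Fin 6) : K :=
  Matrix.det (Matrix.of ![x i, x j, x k])

/-- The determinant `d₂` of the 6×6 matrix of the degree-2 monomials of the six points. -/
def dTwo (x : Fin 6 → Fin 3 → K) : K :=
  Matrix.det (Matrix.of fun i j =>
    ![x i 0 ^ 2, x i 1 ^ 2, x i 2 ^ 2, x i 0 * x i 1, x i 0 * x i 2, x i 1 * x i 2] j)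

/-- Coble's irrational invariant `γ_{(i₁i₂i₃)(i₄i₅i₆)} = m_{i₁i₂i₃} m_{i₄i₅i₆} d₂`. -/
def gammaTriple (x : Fin 6 → Fin 3 → K) (a b c d e f : Fin 6) : K :=
  minor3 x a b c * minor3 x d e f * dTwo x

/-- Coble's irrational invariant
`γ_{(i₁i₂)(i₃i₄)(i₅i₆)} = m_{i₁i₃i₄} m_{i₂i₃i₄} m_{i₃i₅i₆} m_{i₄i₅i₆} m_{i₅i₁i₂} m_{i₆i₁i₂}`. -/
def gammaPair (x : Fin 6 → Fin 3 → K) (a b c d e f : Fin 6) : K :=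
  minor3 x a c d * minor3 x b c d * minor3 x c e f * minor3 x d e f *
    minor3 x e a b * minor3 x f a b

/-- Auxiliary pure-algebra lemma: if the "symmetrized outer product" of two triples vanishes,
then one of the triples vanishes. -/
lemma aux_ab {K : Type*} [Field K] {a0 a1 a2 b0 b1 b2 : K}
    (e0 : a0*b0=0) (e1 : a1*b1=0) (e2 : a2*b2=0)
    (e3 : a0*b1+a1*b0=0) (e4 : a0*b2+a2*b0=0) (e5 : a1*b2+a2*b1=0) :
    (a0=0 ∧ a1=0 ∧ a2=0) ∨ (b0=0 ∧ b1=0 ∧ b2=0) := by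
  rcases mul_eq_zero.mp e0 with h0|h0 <;> rcases mul_eq_zero.mp e1 with h1|h1 <;>
    rcases mul_eq_zero.mp e2 with h2|h2
  · exact Or.inl ⟨h0,h1,h2⟩
  · have f1 : a2*b0 = 0 := by linear_combination e4 - b2*h0
    have f2 : a2*b1 = 0 := by linear_combination e5 - b2*h1
    rcases mul_eq_zero.mp f1 with h|h
    · exact Or.inl ⟨h0,h1,h⟩
    · rcases mul_eq_zero.mp f2 with h'|h'
      · exact Or.inl ⟨h0,h1,h'⟩
      · exact Or.inr ⟨h,h',h2⟩
  · have f1 : a1*b0 = 0 := by linear_combination e3 - b1*h0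
    have f2 : a1*b2 = 0 := by linear_combination e5 - b1*h2
    rcases mul_eq_zero.mp f1 with h|h
    · exact Or.inl ⟨h0,h,h2⟩
    · rcases mul_eq_zero.mp f2 with h'|h'
      · exact Or.inl ⟨h0,h',h2⟩
      · exact Or.inr ⟨h,h1,h'⟩
  · have f1 : a1*b0 = 0 := by linear_combination e3 - b1*h0
    have f2 : a2*b0 = 0 := by linear_combination e4 - b2*h0
    rcases mul_eq_zero.mp f1 with h|h
    · rcases mul_eq_zero.mp f2 with h'|h'
      · exact Or.inl ⟨h0,h,h'⟩
      · exact Or.inr ⟨h',h1,h2⟩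
    · exact Or.inr ⟨h,h1,h2⟩
  · have f1 : a0*b1 = 0 := by linear_combination e3 - b0*h1
    have f2 : a0*b2 = 0 := by linear_combination e4 - b0*h2
    rcases mul_eq_zero.mp f1 with h|h
    · exact Or.inl ⟨h,h1,h2⟩
    · rcases mul_eq_zero.mp f2 with h'|h'
      · exact Or.inl ⟨h',h1,h2⟩
      · exact Or.inr ⟨h0,h,h'⟩
  · have f1 : a0*b1 = 0 := by linear_combination e3 - b0*h1
    have f2 : a2*b1 = 0 := by linear_combination e5 - b2*h1
    rcases mul_eq_zero.mp f1 with h|h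
    · rcases mul_eq_zero.mp f2 with h'|h'
      · exact Or.inl ⟨h,h1,h'⟩
      · exact Or.inr ⟨h0,h',h2⟩
    · exact Or.inr ⟨h0,h,h2⟩
  · have f1 : a0*b2 = 0 := by linear_combination e4 - b0*h2
    have f2 : a1*b2 = 0 := by linear_combination e5 - b1*h2
    rcases mul_eq_zero.mp f1 with h|h
    · rcases mul_eq_zero.mp f2 with h'|h'
      · exact Or.inl ⟨h,h',h2⟩
      · exact Or.inr ⟨h0,h1,h'⟩
    · exact Or.inr ⟨h0,h1,h⟩
  · exact Or.inr ⟨h0,h1,h2⟩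

/-- Auxiliary combinatorial lemma: if among six boolean values every three distinct positions
contain a `true`, then one of the six listed triples is all-`true`. -/
lemma aux_comb : ∀ s : Fin 6 → Bool,
    (∀ p q r : Fin 6, p ≠ q → p ≠ r → q ≠ r → (s p || s q || s r) = true) →
    ((s 0 && s 2 && s 3) || (s 1 && s 2 && s 3) || (s 2 && s 4 && s 5) ||
     (s 3 && s 4 && s 5) || (s 4 && s 0 && s 1) || (s 5 && s 0 && s 1)) = true := by decide

set_option maxHeartbeats 1600000 in
/-- If the six points `p₁, …, p₆ ∈ ℙ²(K̄)` (with representative vectors `x i`, 0-based) are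
such that `p₁, p₂, p₃, p₄` are distinct points on a common line `l` (the kernel of a nonzero
linear functional `φ`) and `p₅, p₆ ∉ l`, then `m₁₂₅³ · m₃₄₆³ ≠ 0` while every irrational
invariant `γ_{(i₁i₂i₃)(i₄i₅i₆)}` and `γ_{(i₁i₂)(i₃i₄)(i₅i₆)}` vanishes. -/
theorem gamma_all_vanish_of_degenerate (x : Fin 6 → Fin 3 → K) (hx : ∀ i, x i ≠ 0)
    (φ : (Fin 3 → K) →ₗ[K] K) (hφ : φ ≠ 0)
    (honline : ∀ i : Fin 6, i ≤ 3 → φ (x i) = 0)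
    (hoffline : φ (x 4) ≠ 0 ∧ φ (x 5) ≠ 0)
    (hdist : ∀ i j : Fin 6, i ≤ 3 → j ≤ 3 → i ≠ j → ∀ c : K, x j ≠ c • x i) :
    minor3 x 0 1 4 ^ 3 * minor3 x 2 3 5 ^ 3 ≠ 0 ∧
    ∀ π : Equiv.Perm (Fin 6),
      gammaTriple x (π 0) (π 1) (π 2) (π 3) (π 4) (π 5) = 0 ∧
      gammaPair x (π 0) (π 1) (π 2) (π 3) (π 4) (π 5) = 0 := by
  classical
  obtain ⟨h4, h5⟩ := hoffline
  -- expansion of a linear functional in coordinates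
  have hexp : ∀ (χ : (Fin 3 → K) →ₗ[K] K) (v : Fin 3 → K),
      χ v = v 0 * χ (fun j => if 0 = j then 1 else 0) + v 1 * χ (fun j => if 1 = j then 1 else 0)
        + v 2 * χ (fun j => if 2 = j then 1 else 0) := by
    intro χ v
    rw [LinearMap.pi_apply_eq_sum_univ χ v, Fin.sum_univ_three]
    simp [smul_eq_mul]
  -- minors of three collinear points vanish
  have hker : ∀ i j k : Fin 6, i ≤ 3 → j ≤ 3 → k ≤ 3 → minor3 x i j k = 0 := by
    intro i j k hi hj hk
    simp only [minor3]
    refine Matrix.exists_mulVec_eq_zero_iff.mp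
      ⟨fun p => φ (fun j => if p = j then 1 else 0), ?_, ?_⟩
    · intro h0
      apply hφ
      refine LinearMap.ext fun v => ?_
      rw [LinearMap.zero_apply, hexp φ v, congrFun h0 0, congrFun h0 1, congrFun h0 2]
      simp
    · funext p
      fin_cases p <;>
        simp [Matrix.mulVec, dotProduct, Fin.sum_univ_three] <;>
        [linear_combination (hexp φ (x i)).symm + honline i hi;
         linear_combination (hexp φ (x j)).symm + honline j hj;
         linear_combination (hexp φ (x k)).symm + honline k hk]
  -- minors of two distinct on-line points and one off-line point do not vanish
  have hne : ∀ i j k : Fin 6, i ≤ 3 → j ≤ 3 → i ≠ j → φ (x k) ≠ 0 → minor3 x i j k ≠ 0 := by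
    intro i j k hi hj hij hfc hdet
    simp only [minor3] at hdet
    obtain ⟨v, hv, hvM⟩ := Matrix.exists_vecMul_eq_zero_iff.mpr hdet
    have hrel : ∀ q, v 0 * x i q + v 1 * x j q + v 2 * x k q = 0 := by
      intro q
      have := congrFun hvM q
      simpa [Matrix.vecMul, dotProduct, Fin.sum_univ_three] using this
    have hw : v 0 • x i + v 1 • x j + v 2 • x k = 0 := funext fun q => by
      simpa using hrel q
    have hφw : v 0 * φ (x i) + v 1 * φ (x j) + v 2 * φ (x k) = 0 := by
      have := congrArg φ hw
      simpa [smul_eq_mul] using this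
    have hv2 : v 2 = 0 := by
      rw [honline i hi, honline j hj] at hφw
      have : v 2 * φ (x k) = 0 := by linear_combination hφw
      exact (mul_eq_zero.mp this).resolve_right hfc
    by_cases hv1 : v 1 = 0
    · have hv0 : v 0 ≠ 0 := by
        intro hv0
        apply hv
        funext q
        fin_cases q <;> simp [hv0, hv1, hv2]
      apply hx i
      funext q
      have := hrel q
      rw [hv1, hv2] at this
      simp only [zero_mul, add_zero] at this
      simpa using (mul_eq_zero.mp this).resolve_left hv0
    · apply hdist i j hi hj hij (-(v 0) / v 1)
      funext q
      have := hrel q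
      rw [hv2] at this
      rw [Pi.smul_apply, smul_eq_mul, div_mul_eq_mul_div, eq_div_iff hv1]
      linear_combination this
  -- a nonzero linear functional vanishing on x 4 and x 5
  have hlt : Submodule.span K (Set.range ![x 4, x 5]) < ⊤ := by
    rw [lt_top_iff_ne_top]
    intro h
    have h1 := finrank_range_le_card (R := K) ![x 4, x 5]
    rw [Set.finrank, h, finrank_top] at h1
    simp [Module.finrank_pi] at h1
  obtain ⟨ψ, hψ, hmap⟩ := Submodule.exists_dual_map_eq_bot_of_lt_top hlt inferInstance
  have hψ4 : ψ (x 4) = 0 := by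
    have : ψ (x 4) ∈ Submodule.map ψ (Submodule.span K (Set.range ![x 4, x 5])) :=
      Submodule.mem_map_of_mem (Submodule.subset_span ⟨0, rfl⟩)
    rw [hmap] at this
    exact (Submodule.mem_bot K).mp this
  have hψ5 : ψ (x 5) = 0 := by
    have : ψ (x 5) ∈ Submodule.map ψ (Submodule.span K (Set.range ![x 4, x 5])) :=
      Submodule.mem_map_of_mem (Submodule.subset_span ⟨1, rfl⟩)
    rw [hmap] at this
    exact (Submodule.mem_bot K).mp this
  -- all six points lie on the degenerate conic φ·ψ = 0
  have hq : ∀ i : Fin 6, φ (x i) * ψ (x i) = 0 := by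
    intro i
    by_cases hi : i ≤ 3
    · rw [honline i hi, zero_mul]
    · have hlt6 := i.isLt
      have hiv : ¬ i.val ≤ 3 := fun hle => hi (by
        rw [Fin.le_def, show ((3:Fin 6)).val = 3 from rfl]; exact hle)
      have : i.val = 4 ∨ i.val = 5 := by omega
      rcases this with h|h
      · have : i = 4 := Fin.ext h
        rw [this, hψ4, mul_zero]
      · have : i = 5 := Fin.ext h
        rw [this, hψ5, mul_zero]
  -- hence d₂ vanishes
  have hd2 : dTwo x = 0 := by
    set a : Fin 3 → K := fun p => φ (fun j => if p = j then 1 else 0) with haa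
    set b : Fin 3 → K := fun p => ψ (fun j => if p = j then 1 else 0) with hbb
    have hane : ¬ (a 0 = 0 ∧ a 1 = 0 ∧ a 2 = 0) := by
      rintro ⟨h0', h1', h2'⟩
      apply hφ
      refine LinearMap.ext fun v => ?_
      rw [LinearMap.zero_apply, hexp φ v,
        show φ (fun j => if 0 = j then 1 else 0) = a 0 from rfl,
        show φ (fun j => if 1 = j then 1 else 0) = a 1 from rfl,
        show φ (fun j => if 2 = j then 1 else 0) = a 2 from rfl, h0', h1', h2']
      ring
    have hbne : ¬ (b 0 = 0 ∧ b 1 = 0 ∧ b 2 = 0) := by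
      rintro ⟨h0', h1', h2'⟩
      apply hψ
      refine LinearMap.ext fun v => ?_
      rw [LinearMap.zero_apply, hexp ψ v,
        show ψ (fun j => if 0 = j then 1 else 0) = b 0 from rfl,
        show ψ (fun j => if 1 = j then 1 else 0) = b 1 from rfl,
        show ψ (fun j => if 2 = j then 1 else 0) = b 2 from rfl, h0', h1', h2']
      ring
    refine Matrix.exists_mulVec_eq_zero_iff.mp
      ⟨![a 0 * b 0, a 1 * b 1, a 2 * b 2, a 0 * b 1 + a 1 * b 0,
         a 0 * b 2 + a 2 * b 0, a 1 * b 2 + a 2 * b 1], ?_, ?_⟩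
    · intro h0
      have e0 : a 0 * b 0 = 0 := by simpa using congrFun h0 0
      have e1 : a 1 * b 1 = 0 := by simpa using congrFun h0 1
      have e2 : a 2 * b 2 = 0 := by simpa using congrFun h0 2
      have e3 : a 0 * b 1 + a 1 * b 0 = 0 := by simpa using congrFun h0 3
      have e4 : a 0 * b 2 + a 2 * b 0 = 0 := by simpa using congrFun h0 4
      have e5 : a 1 * b 2 + a 2 * b 1 = 0 := by simpa using congrFun h0 5
      rcases aux_ab e0 e1 e2 e3 e4 e5 with h | h
      · exact hane h
      · exact hbne h
    · funext i
      have h1 := hexp φ (x i)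
      have h2 := hexp ψ (x i)
      rw [show φ (fun j => if 0 = j then 1 else 0) = a 0 from rfl,
        show φ (fun j => if 1 = j then 1 else 0) = a 1 from rfl,
        show φ (fun j => if 2 = j then 1 else 0) = a 2 from rfl] at h1
      rw [show ψ (fun j => if 0 = j then 1 else 0) = b 0 from rfl,
        show ψ (fun j => if 1 = j then 1 else 0) = b 1 from rfl,
        show ψ (fun j => if 2 = j then 1 else 0) = b 2 from rfl] at h2
      have hq2 := hq i
      rw [h1, h2] at hq2
      simp [Matrix.mulVec, dotProduct, Fin.sum_univ_six]
      linear_combination hq2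
  constructor
  · exact mul_ne_zero
      (pow_ne_zero _ (hne 0 1 4 (by decide) (by decide) (by decide) h4))
      (pow_ne_zero _ (hne 2 3 5 (by decide) (by decide) (by decide) h5))
  · intro π
    constructor
    · simp [gammaTriple, hd2]
    · set s : Fin 6 → Bool := fun p => decide (π p ≤ 3) with hs
      have h3 : ∀ p q r : Fin 6, p ≠ q → p ≠ r → q ≠ r → (s p || s q || s r) = true := by
        intro p q r hpq hpr hqr
        by_contra h
        simp only [hs, Bool.or_eq_true, decide_eq_true_eq, not_or] at h
        obtain ⟨⟨hp, hq'⟩, hr⟩ := h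
        have n1 : (π p).val ≠ (π q).val := fun he => hpq (π.injective (Fin.val_injective he))
        have n2 : (π p).val ≠ (π r).val := fun he => hpr (π.injective (Fin.val_injective he))
        have n3 : (π q).val ≠ (π r).val := fun he => hqr (π.injective (Fin.val_injective he))
        have l1 := (π p).isLt
        have l2 := (π q).isLt
        have l3 := (π r).isLt
        have m1 : ¬ (π p).val ≤ 3 := fun hle => hp (by
          rw [Fin.le_def, show ((3:Fin 6)).val = 3 from rfl]; exact hle)
        have m2 : ¬ (π q).val ≤ 3 := fun hle => hq' (by
          rw [Fin.le_def, show ((3:Fin 6)).val = 3 from rfl]; exact hle)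
        have m3 : ¬ (π r).val ≤ 3 := fun hle => hr (by
          rw [Fin.le_def, show ((3:Fin 6)).val = 3 from rfl]; exact hle)
        omega
      have hc := aux_comb s h3
      simp only [hs, Bool.or_eq_true, Bool.and_eq_true, decide_eq_true_eq] at hc
      rcases hc with ((((⟨⟨ha, hb⟩, hcc⟩ | ⟨⟨ha, hb⟩, hcc⟩) | ⟨⟨ha, hb⟩, hcc⟩) |
        ⟨⟨ha, hb⟩, hcc⟩) | ⟨⟨ha, hb⟩, hcc⟩) | ⟨⟨ha, hb⟩, hcc⟩
      · simp [gammaPair, hker (π 0) (π 2) (π 3) ha hb hcc]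
      · simp [gammaPair, hker (π 1) (π 2) (π 3) ha hb hcc]
      · simp [gammaPair, hker (π 2) (π 4) (π 5) ha hb hcc]
      · simp [gammaPair, hker (π 3) (π 4) (π 5) ha hb hcc]
      · simp [gammaPair, hker (π 4) (π 0) (π 1) ha hb hcc]
      · simp [gammaPair, hker (π 5) (π 0) (π 1) ha hb hcc]
end
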